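/- Let Λ < π² be a real number and let f : [0,1] → ℝ be continuous on [0,1], twice continuously differentiable on (0,1), and nonnegative. Then the following are equivalent: (1) f''(t) + Λ f(t) ≥ 0 for every t ∈ (0,1); (2) for all t, s₀, s₁ ∈ [0,1], f((1−t)s₀ + t s₁) ≤ σ_Λ^{(1−t)}(|s₀−s₁|) f(s₀) + σ_Λ^{(t)}(|s₀−s₁|) f(s₁). -/

import Mathlib

set_option maxHeartbeats 1000000

/-- Distortion coefficient `σ_Λ^{(t)}(θ)`. -/
noncomputable def sigmaCoeff (Λ t θ : ℝ) : ℝ :=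
  if Λ * θ ^ 2 = 0 then t
  else if 0 < Λ * θ ^ 2 then
    Real.sin (t * (θ * Real.sqrt Λ)) / Real.sin (θ * Real.sqrt Λ)
  else
    Real.sinh (t * (θ * Real.sqrt (-Λ))) / Real.sinh (θ * Real.sqrt (-Λ))


open Real Set

/-- Core maximum principle with an explicit positive solution `φ`. -/
lemma mp_core (lam : ℝ) (h h' h'' φ φ' φ'' : ℝ → ℝ)
    (hφpos : ∀ t ∈ Icc (0:ℝ) 1, 0 < φ t)
    (hφd1 : ∀ t, HasDerivAt φ (φ' t) t)
    (hφd2 : ∀ t, HasDerivAt φ' (φ'' t) t)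
    (hφeq : ∀ t, φ'' t + lam * φ t = 0)
    (hc : ContinuousOn h (Icc 0 1))
    (hd1 : ∀ t ∈ Ioo (0:ℝ) 1, HasDerivAt h (h' t) t)
    (hd2 : ∀ t ∈ Ioo (0:ℝ) 1, HasDerivAt h' (h'' t) t)
    (hineq : ∀ t ∈ Ioo (0:ℝ) 1, h'' t + lam * h t ≤ 0)
    (h0 : h 0 = 0) (h1 : h 1 = 0) :
    ∀ t ∈ Icc (0:ℝ) 1, 0 ≤ h t := by
  by_contra hcon
  push_neg at hcon
  obtain ⟨x, hx, hxneg⟩ := hcon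
  have hx0 : x ≠ 0 := by rintro rfl; rw [h0] at hxneg; exact lt_irrefl _ hxneg
  have hx1 : x ≠ 1 := by rintro rfl; rw [h1] at hxneg; exact lt_irrefl _ hxneg
  have hxI : x ∈ Ioo (0:ℝ) 1 :=
    ⟨lt_of_le_of_ne hx.1 (Ne.symm hx0), lt_of_le_of_ne hx.2 hx1⟩
  set w : ℝ → ℝ := fun t => h' t * φ t - h t * φ' t with hw
  set v : ℝ → ℝ := fun t => h t / φ t with hv
  have hφc : Continuous φ := continuous_iff_continuousAt.2 fun t => (hφd1 t).continuousAt
  have hφ'c : Continuous φ' := continuous_iff_continuousAt.2 fun t => (hφd2 t).continuousAt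
  have hvc : ContinuousOn v (Icc 0 1) :=
    hc.div (hφc.continuousOn) (fun t ht => (hφpos t ht).ne')
  have hIoo_sub : Ioo (0:ℝ) 1 ⊆ Icc (0:ℝ) 1 := Ioo_subset_Icc_self
  have hvd : ∀ t ∈ Ioo (0:ℝ) 1, HasDerivAt v (w t / φ t ^ 2) t := by
    intro t ht
    exact (hd1 t ht).div (hφd1 t) (hφpos t (hIoo_sub ht)).ne'
  have hv0 : v 0 = 0 := by simp [hv, h0]
  have hv1 : v 1 = 0 := by simp [hv, h1]
  have hvx : v x < 0 := div_neg_of_neg_of_pos hxneg (hφpos x hx)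
  -- MVT on [0, x]
  obtain ⟨a, haI, haeq⟩ := exists_hasDerivAt_eq_slope v (fun t => w t / φ t ^ 2) hxI.1
    (hvc.mono (Icc_subset_Icc le_rfl hx.2))
    (fun t ht => hvd t ⟨ht.1, lt_of_lt_of_le ht.2 hx.2⟩)
  -- MVT on [x, 1]
  obtain ⟨b, hbI, hbeq⟩ := exists_hasDerivAt_eq_slope v (fun t => w t / φ t ^ 2) hxI.2
    (hvc.mono (Icc_subset_Icc hx.1 le_rfl))
    (fun t ht => hvd t ⟨lt_of_le_of_lt hx.1 ht.1, ht.2⟩)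
  have haI' : a ∈ Ioo (0:ℝ) 1 := ⟨haI.1, lt_trans haI.2 hxI.2⟩
  have hbI' : b ∈ Ioo (0:ℝ) 1 := ⟨lt_trans hxI.1 hbI.1, hbI.2⟩
  have hwa : w a < 0 := by
    have hslope : (v x - v 0) / (x - 0) < 0 := by
      apply div_neg_of_neg_of_pos
      · rw [hv0]; linarith
      · linarith [hxI.1]
    rw [← haeq] at hslope
    by_contra hge
    push_neg at hge
    exact absurd hslope (not_lt.2 (div_nonneg hge (sq_nonneg _)))
  have hwb : 0 < w b := by
    have hslope : 0 < (v 1 - v x) / (1 - x) := by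
      apply div_pos
      · rw [hv1]; linarith
      · linarith [hxI.2]
    rw [← hbeq] at hslope
    by_contra hge
    push_neg at hge
    have : w b / φ b ^ 2 ≤ 0 := div_nonpos_of_nonpos_of_nonneg hge (sq_nonneg _)
    linarith
  -- w is antitone on [a, b]
  have hWderiv : ∀ t ∈ Ioo (0:ℝ) 1, HasDerivAt w (φ t * (h'' t + lam * h t)) t := by
    intro t ht
    have H := ((hd2 t ht).mul (hφd1 t)).sub ((hd1 t ht).mul (hφd2 t))
    have hval : h'' t * φ t + h' t * φ' t - (h' t * φ' t + h t * φ'' t)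
        = φ t * (h'' t + lam * h t) := by linear_combination (-(h t)) * hφeq t
    rw [hval] at H
    exact H
  have hab : a < b := lt_trans haI.2 hbI.1
  have hIab : Icc a b ⊆ Ioo (0:ℝ) 1 := fun t ht =>
    ⟨lt_of_lt_of_le haI'.1 ht.1, lt_of_le_of_lt ht.2 hbI'.2⟩
  have hanti : AntitoneOn w (Icc a b) := by
    apply antitoneOn_of_deriv_nonpos (convex_Icc a b)
    · intro t ht
      exact (((hd2 t (hIab ht)).continuousAt.mul (hφd1 t).continuousAt).sub
        ((hd1 t (hIab ht)).continuousAt.mul (hφd2 t).continuousAt)).continuousWithinAt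
    · intro t ht
      rw [interior_Icc] at ht
      exact (hWderiv t (hIab (Ioo_subset_Icc_self ht))).differentiableAt.differentiableWithinAt
    · intro t ht
      rw [interior_Icc] at ht
      have ht' := hIab (Ioo_subset_Icc_self ht)
      rw [(hWderiv t ht').deriv]
      exact mul_nonpos_of_nonneg_of_nonpos (hφpos t (hIoo_sub ht')).le (hineq t ht')
  have := hanti (left_mem_Icc.2 hab.le) (right_mem_Icc.2 hab.le) hab.le
  linarith

/-- Maximum principle for `h'' + lam·h ≤ 0`, `lam < π²`. -/
lemma mp (lam : ℝ) (hlam : lam < Real.pi ^ 2) (h h' h'' : ℝ → ℝ)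
    (hc : ContinuousOn h (Icc 0 1))
    (hd1 : ∀ t ∈ Ioo (0:ℝ) 1, HasDerivAt h (h' t) t)
    (hd2 : ∀ t ∈ Ioo (0:ℝ) 1, HasDerivAt h' (h'' t) t)
    (hineq : ∀ t ∈ Ioo (0:ℝ) 1, h'' t + lam * h t ≤ 0)
    (h0 : h 0 = 0) (h1 : h 1 = 0) :
    ∀ t ∈ Icc (0:ℝ) 1, 0 ≤ h t := by
  rcases le_or_gt lam 0 with hl | hl
  · set k : ℝ := Real.sqrt (-lam) with hk
    have hk2 : k * k = -lam := Real.mul_self_sqrt (by linarith)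
    have hinner : ∀ t : ℝ, HasDerivAt (fun t : ℝ => k * t) k t := by
      intro t
      simpa using (hasDerivAt_id t).const_mul k
    refine mp_core lam h h' h'' (fun t => Real.cosh (k * t))
      (fun t => Real.sinh (k * t) * k) (fun t => Real.cosh (k * t) * k * k)
      (fun t _ => Real.cosh_pos _) ?_ ?_ ?_ hc hd1 hd2 hineq h0 h1
    · intro t
      simpa [Function.comp_def] using (Real.hasDerivAt_cosh (k * t)).comp t (hinner t)
    · intro t
      have Hs : HasDerivAt (fun s => Real.sinh (k * s)) (Real.cosh (k * t) * k) t := by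
        simpa [Function.comp_def] using (Real.hasDerivAt_sinh (k * t)).comp t (hinner t)
      exact (Hs.mul_const k).congr_deriv (by ring)
    · intro t
      linear_combination Real.cosh (k * t) * hk2
  · set k : ℝ := Real.sqrt lam with hk
    have hk2 : k * k = lam := Real.mul_self_sqrt hl.le
    have hkpos : 0 < k := Real.sqrt_pos.2 hl
    have hkpi : k < Real.pi := by
      have : k ^ 2 < Real.pi ^ 2 := by rw [sq]; rw [hk2]; exact hlam
      nlinarith [Real.pi_pos]
    have hinner : ∀ t : ℝ, HasDerivAt (fun t : ℝ => k * (t - 1/2)) k t := by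
      intro t
      simpa using (((hasDerivAt_id t).sub_const (1/2:ℝ)).const_mul k)
    refine mp_core lam h h' h'' (fun t => Real.cos (k * (t - 1/2)))
      (fun t => -(Real.sin (k * (t - 1/2)) * k)) (fun t => -(Real.cos (k * (t - 1/2)) * k * k))
      ?_ ?_ ?_ ?_ hc hd1 hd2 hineq h0 h1
    · intro t ht
      apply Real.cos_pos_of_mem_Ioo
      constructor
      · nlinarith [ht.1, ht.2, Real.pi_pos]
      · nlinarith [ht.1, ht.2, Real.pi_pos]
    · intro t
      have Hc : HasDerivAt (fun s => Real.cos (k * (s - 1/2))) (-Real.sin (k * (t - 1/2)) * k) t := by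
        simpa [Function.comp_def] using (Real.hasDerivAt_cos (k * (t - 1/2))).comp t (hinner t)
      exact Hc.congr_deriv (by ring)
    · intro t
      have Hs : HasDerivAt (fun s => Real.sin (k * (s - 1/2))) (Real.cos (k * (t - 1/2)) * k) t := by
        simpa [Function.comp_def] using (Real.hasDerivAt_sin (k * (t - 1/2))).comp t (hinner t)
      exact ((Hs.mul_const k).neg).congr_deriv (by ring)
    · intro t
      linear_combination (-(Real.cos (k * (t - 1/2)))) * hk2

/-- Comparison: a subsolution lies below the solution with the same boundary values. -/
lemma comparison (lam : ℝ) (hlam : lam < Real.pi ^ 2) (g g' g'' u u' u'' : ℝ → ℝ)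
    (hgc : ContinuousOn g (Icc 0 1))
    (hg1 : ∀ t ∈ Ioo (0:ℝ) 1, HasDerivAt g (g' t) t)
    (hg2 : ∀ t ∈ Ioo (0:ℝ) 1, HasDerivAt g' (g'' t) t)
    (hgineq : ∀ t ∈ Ioo (0:ℝ) 1, 0 ≤ g'' t + lam * g t)
    (hud1 : ∀ t, HasDerivAt u (u' t) t)
    (hud2 : ∀ t, HasDerivAt u' (u'' t) t)
    (hueq : ∀ t, u'' t + lam * u t = 0)
    (hu0 : u 0 = g 0) (hu1 : u 1 = g 1) :
    ∀ t ∈ Icc (0:ℝ) 1, g t ≤ u t := by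
  have huc : Continuous u := continuous_iff_continuousAt.2 fun t => (hud1 t).continuousAt
  have key := mp lam hlam (fun s => u s - g s) (fun s => u' s - g' s) (fun s => u'' s - g'' s)
    (huc.continuousOn.sub hgc)
    (fun t ht => (hud1 t).sub (hg1 t ht))
    (fun t ht => (hud2 t).sub (hg2 t ht))
    (fun t ht => by have h1 := hueq t; have h2 := hgineq t ht; nlinarith)
    (by simp [hu0]) (by simp [hu1])
  intro t ht
  have := key t ht
  linarith

/-- `cosh x ≥ 1 + x²/2` for `x ≥ 0`. -/
lemma cosh_lb (x : ℝ) (hx : 0 ≤ x) : 1 + x ^ 2 / 2 ≤ Real.cosh x := by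
  have h1 : x / 2 ≤ Real.sinh (x / 2) := Real.self_le_sinh_iff.2 (by linarith)
  have h2 : Real.cosh x = Real.cosh (x / 2) ^ 2 + Real.sinh (x / 2) ^ 2 := by
    rw [← Real.cosh_two_mul]; congr 1; ring
  have h3 : Real.cosh (x / 2) ^ 2 = Real.sinh (x / 2) ^ 2 + 1 := Real.cosh_sq _
  nlinarith [h1]

lemma forward (Λ : ℝ) (hΛ : Λ < Real.pi ^ 2)
    (f f' f'' : ℝ → ℝ)
    (hf : ContinuousOn f (Set.Icc 0 1))
    (hf' : ∀ t ∈ Set.Ioo (0 : ℝ) 1, HasDerivAt f (f' t) t)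
    (hf'' : ∀ t ∈ Set.Ioo (0 : ℝ) 1, HasDerivAt f' (f'' t) t)
    (hyp : ∀ t ∈ Set.Ioo (0 : ℝ) 1, 0 ≤ f'' t + Λ * f t) :
    ∀ t ∈ Set.Icc (0 : ℝ) 1, ∀ s₀ ∈ Set.Icc (0 : ℝ) 1, ∀ s₁ ∈ Set.Icc (0 : ℝ) 1,
      f ((1 - t) * s₀ + t * s₁) ≤
        sigmaCoeff Λ (1 - t) |s₀ - s₁| * f s₀ + sigmaCoeff Λ t |s₀ - s₁| * f s₁ := by
  intro t ht s₀ hs₀ s₁ hs₁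
  by_cases hss : s₀ = s₁
  · subst hss
    have hc0 : Λ * |s₀ - s₀| ^ 2 = 0 := by simp
    simp only [sigmaCoeff, if_pos hc0]
    have e1 : (1 - t) * s₀ + t * s₀ = s₀ := by ring
    have e2 : (1 - t) * f s₀ + t * f s₀ = f s₀ := by ring
    rw [e1, e2]
  · set d : ℝ := s₁ - s₀ with hd_def
    have hd : d ≠ 0 := sub_ne_zero.2 (Ne.symm hss)
    set θ : ℝ := |s₀ - s₁| with hθ_def
    have hθpos : 0 < θ := abs_pos.2 (sub_ne_zero.2 hss)
    have hθd : θ ^ 2 = d ^ 2 := by rw [hθ_def, sq_abs, hd_def]; ring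
    have hθ1 : θ ≤ 1 := by
      rw [hθ_def]
      rw [abs_le]
      constructor
      · linarith [hs₀.1, hs₁.2]
      · linarith [hs₀.2, hs₁.1]
    set lam : ℝ := Λ * θ ^ 2 with hlamdef
    have hlam : lam < Real.pi ^ 2 := by
      rcases le_or_gt Λ 0 with hL | hL
      · have : lam ≤ 0 := mul_nonpos_of_nonpos_of_nonneg hL (sq_nonneg θ)
        nlinarith [Real.pi_pos]
      · have hθsq : θ ^ 2 ≤ 1 := by nlinarith
        nlinarith
    -- the path
    have hinner : ∀ τ : ℝ, HasDerivAt (fun τ : ℝ => s₀ + τ * d) d τ := by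
      intro τ
      simpa using ((hasDerivAt_id τ).mul_const d).const_add s₀
    have hmem : ∀ τ ∈ Ioo (0:ℝ) 1, s₀ + τ * d ∈ Ioo (0:ℝ) 1 := by
      intro τ hτ
      rcases lt_or_gt_of_ne hd with hdneg | hdpos
      · constructor
        · nlinarith [hs₁.1, mul_neg_of_pos_of_neg (show (0:ℝ) < 1 - τ by linarith [hτ.2]) hdneg]
        · nlinarith [hs₀.2, mul_neg_of_pos_of_neg hτ.1 hdneg]
      · constructor
        · nlinarith [hs₀.1, mul_pos hτ.1 hdpos]
        · nlinarith [hs₁.2, mul_pos (show (0:ℝ) < 1 - τ by linarith [hτ.2]) hdpos]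
    have hmemc : ∀ τ ∈ Icc (0:ℝ) 1, s₀ + τ * d ∈ Icc (0:ℝ) 1 := by
      intro τ hτ
      rcases lt_or_gt_of_ne hd with hdneg | hdpos
      · constructor
        · nlinarith [hs₁.1, mul_nonneg (show (0:ℝ) ≤ 1 - τ by linarith [hτ.2]) (show (0:ℝ) ≤ -d by linarith)]
        · nlinarith [hs₀.2, mul_nonneg hτ.1 (show (0:ℝ) ≤ -d by linarith)]
      · constructor
        · nlinarith [hs₀.1, mul_nonneg hτ.1 hdpos.le]
        · nlinarith [hs₁.2, mul_nonneg (show (0:ℝ) ≤ 1 - τ by linarith [hτ.2]) hdpos.le]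
    set g : ℝ → ℝ := fun τ => f (s₀ + τ * d) with hg_def
    have hgc : ContinuousOn g (Icc 0 1) := by
      apply hf.comp
      · exact (continuous_const.add (continuous_id.mul continuous_const)).continuousOn
      · exact fun τ hτ => hmemc τ hτ
    have hg1 : ∀ τ ∈ Ioo (0:ℝ) 1, HasDerivAt g (f' (s₀ + τ * d) * d) τ := by
      intro τ hτ
      exact (hf' _ (hmem τ hτ)).comp τ (hinner τ)
    have hg2 : ∀ τ ∈ Ioo (0:ℝ) 1,
        HasDerivAt (fun τ => f' (s₀ + τ * d) * d) (f'' (s₀ + τ * d) * d * d) τ := by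
      intro τ hτ
      exact ((hf'' _ (hmem τ hτ)).comp τ (hinner τ)).mul_const d
    have hgineq : ∀ τ ∈ Ioo (0:ℝ) 1, 0 ≤ f'' (s₀ + τ * d) * d * d + lam * g τ := by
      intro τ hτ
      have h1 := hyp _ (hmem τ hτ)
      have h2 : lam = Λ * d ^ 2 := by rw [hlamdef, hθd]
      rw [h2]
      simp only [hg_def]
      nlinarith [mul_nonneg (sq_nonneg d) h1]
    have harg : (1 - t) * s₀ + t * s₁ = s₀ + t * d := by rw [hd_def]; ring
    rcases lt_trichotomy lam 0 with hl | hl | hl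
    · -- lam < 0, so Λ < 0
      have hΛneg : Λ < 0 := by
        by_contra hge
        push_neg at hge
        have : 0 ≤ lam := by rw [hlamdef]; exact mul_nonneg hge (sq_nonneg θ)
        linarith
      have hne : Λ * θ ^ 2 ≠ 0 := by rw [← hlamdef]; exact hl.ne
      have hnpos : ¬ (0 < Λ * θ ^ 2) := by rw [← hlamdef]; linarith
      set a : ℝ := θ * Real.sqrt (-Λ) with ha_def
      have ha2 : a ^ 2 = -lam := by
        rw [ha_def, mul_pow, Real.sq_sqrt (by linarith : (0:ℝ) ≤ -Λ), hlamdef]; ring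
      have hapos : 0 < a := mul_pos hθpos (Real.sqrt_pos.2 (by linarith))
      have hsinha : 0 < Real.sinh a := Real.sinh_pos_iff.2 hapos
      have hσ : ∀ τ : ℝ, sigmaCoeff Λ τ θ = Real.sinh (τ * a) / Real.sinh a := by
        intro τ
        rw [sigmaCoeff, if_neg hne, if_neg hnpos, ← ha_def]
      have hi1 : ∀ τ : ℝ, HasDerivAt (fun τ : ℝ => (1 - τ) * a) (-a) τ := by
        intro τ
        simpa using (((hasDerivAt_const τ (1:ℝ)).sub (hasDerivAt_id τ)).mul_const a)
      have hi2 : ∀ τ : ℝ, HasDerivAt (fun τ : ℝ => τ * a) a τ := by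
        intro τ
        simpa using (hasDerivAt_id τ).mul_const a
      have hsinh1 : ∀ τ, HasDerivAt (fun τ => Real.sinh ((1 - τ) * a))
          (Real.cosh ((1 - τ) * a) * -a) τ :=
        fun τ => by have := (Real.hasDerivAt_sinh ((1 - τ) * a)).comp τ (hi1 τ); exact this
      have hsinh2 : ∀ τ, HasDerivAt (fun τ => Real.sinh (τ * a))
          (Real.cosh (τ * a) * a) τ :=
        fun τ => by have := (Real.hasDerivAt_sinh (τ * a)).comp τ (hi2 τ); exact this
      have hcosh1 : ∀ τ, HasDerivAt (fun τ => Real.cosh ((1 - τ) * a))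
          (Real.sinh ((1 - τ) * a) * -a) τ :=
        fun τ => by have := (Real.hasDerivAt_cosh ((1 - τ) * a)).comp τ (hi1 τ); exact this
      have hcosh2 : ∀ τ, HasDerivAt (fun τ => Real.cosh (τ * a))
          (Real.sinh (τ * a) * a) τ :=
        fun τ => by have := (Real.hasDerivAt_cosh (τ * a)).comp τ (hi2 τ); exact this
      set u : ℝ → ℝ := fun τ =>
        Real.sinh ((1 - τ) * a) / Real.sinh a * f s₀ + Real.sinh (τ * a) / Real.sinh a * f s₁
        with hu_def
      set u' : ℝ → ℝ := fun τ =>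
        Real.cosh ((1 - τ) * a) * -a / Real.sinh a * f s₀ +
          Real.cosh (τ * a) * a / Real.sinh a * f s₁ with hu'_def
      set u'' : ℝ → ℝ := fun τ =>
        Real.sinh ((1 - τ) * a) * -a * -a / Real.sinh a * f s₀ +
          Real.sinh (τ * a) * a * a / Real.sinh a * f s₁ with hu''_def
      have hud1 : ∀ τ, HasDerivAt u (u' τ) τ := fun τ =>
        (((hsinh1 τ).div_const _).mul_const (f s₀)).add
          (((hsinh2 τ).div_const _).mul_const (f s₁))
      have hud2 : ∀ τ, HasDerivAt u' (u'' τ) τ := fun τ =>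
        ((((hcosh1 τ).mul_const (-a)).div_const _).mul_const (f s₀)).add
          ((((hcosh2 τ).mul_const a).div_const _).mul_const (f s₁))
      have hueq : ∀ τ, u'' τ + lam * u τ = 0 := by
        intro τ
        simp only [hu''_def, hu_def]
        linear_combination (Real.sinh ((1 - τ) * a) / Real.sinh a * f s₀ +
          Real.sinh (τ * a) / Real.sinh a * f s₁) * ha2
      have hu0 : u 0 = g 0 := by
        simp only [hu_def, hg_def]
        norm_num [div_self hsinha.ne']
      have hu1 : u 1 = g 1 := by
        simp only [hu_def, hg_def]
        norm_num [div_self hsinha.ne']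
        congr 1
        rw [hd_def]; ring
      have key := comparison lam hlam g _ _ u u' u'' hgc hg1 hg2 hgineq hud1 hud2 hueq hu0 hu1
        t ht
      rw [harg, hσ, hσ]
      simp only [hg_def, hu_def] at key
      exact key
    · -- lam = 0
      have hc0 : Λ * θ ^ 2 = 0 := by rw [← hlamdef]; exact hl
      have hσ : ∀ τ : ℝ, sigmaCoeff Λ τ θ = τ := by
        intro τ; rw [sigmaCoeff, if_pos hc0]
      set u : ℝ → ℝ := fun τ => (1 - τ) * f s₀ + τ * f s₁ with hu_def
      set u' : ℝ → ℝ := fun _ => (0 - 1) * f s₀ + 1 * f s₁ with hu'_def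
      have hud1 : ∀ τ, HasDerivAt u (u' τ) τ := fun τ =>
        (((hasDerivAt_const τ (1:ℝ)).sub (hasDerivAt_id τ)).mul_const (f s₀)).add
          ((hasDerivAt_id τ).mul_const (f s₁))
      have hud2 : ∀ τ, HasDerivAt u' ((fun _ : ℝ => (0:ℝ)) τ) τ := fun τ =>
        hasDerivAt_const τ _
      have hueq : ∀ τ, (fun _ : ℝ => (0:ℝ)) τ + lam * u τ = 0 := by
        intro τ; simp [hl]
      have hu0 : u 0 = g 0 := by simp only [hu_def, hg_def]; norm_num
      have hu1 : u 1 = g 1 := by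
        simp only [hu_def, hg_def]
        norm_num
        congr 1
        rw [hd_def]; ring
      have key := comparison lam hlam g _ _ u u' _ hgc hg1 hg2 hgineq hud1 hud2 hueq hu0 hu1
        t ht
      rw [harg, hσ, hσ]
      have e1 : (1 - t) * f s₀ + t * f s₁ = u t := by rw [hu_def]
      linarith [key]
    · -- lam > 0, so Λ > 0
      have hΛpos : 0 < Λ := by
        by_contra hge
        push_neg at hge
        have : lam ≤ 0 := by rw [hlamdef]; exact mul_nonpos_of_nonpos_of_nonneg hge (sq_nonneg θ)
        linarith
      have hne : Λ * θ ^ 2 ≠ 0 := by rw [← hlamdef]; exact hl.ne'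
      have hpos' : 0 < Λ * θ ^ 2 := by rw [← hlamdef]; exact hl
      set a : ℝ := θ * Real.sqrt Λ with ha_def
      have ha2 : a ^ 2 = lam := by
        rw [ha_def, mul_pow, Real.sq_sqrt hΛpos.le, hlamdef]; ring
      have hapos : 0 < a := mul_pos hθpos (Real.sqrt_pos.2 hΛpos)
      have hapi : a < Real.pi := by nlinarith [Real.pi_pos]
      have hsina : 0 < Real.sin a := Real.sin_pos_of_pos_of_lt_pi hapos hapi
      have hσ : ∀ τ : ℝ, sigmaCoeff Λ τ θ = Real.sin (τ * a) / Real.sin a := by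
        intro τ
        rw [sigmaCoeff, if_neg hne, if_pos hpos', ← ha_def]
      have hi1 : ∀ τ : ℝ, HasDerivAt (fun τ : ℝ => (1 - τ) * a) (-a) τ := by
        intro τ
        simpa using (((hasDerivAt_const τ (1:ℝ)).sub (hasDerivAt_id τ)).mul_const a)
      have hi2 : ∀ τ : ℝ, HasDerivAt (fun τ : ℝ => τ * a) a τ := by
        intro τ
        simpa using (hasDerivAt_id τ).mul_const a
      have hsin1 : ∀ τ, HasDerivAt (fun τ => Real.sin ((1 - τ) * a))
          (Real.cos ((1 - τ) * a) * -a) τ :=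
        fun τ => by have := (Real.hasDerivAt_sin ((1 - τ) * a)).comp τ (hi1 τ); exact this
      have hsin2 : ∀ τ, HasDerivAt (fun τ => Real.sin (τ * a))
          (Real.cos (τ * a) * a) τ :=
        fun τ => by have := (Real.hasDerivAt_sin (τ * a)).comp τ (hi2 τ); exact this
      have hcos1 : ∀ τ, HasDerivAt (fun τ => Real.cos ((1 - τ) * a))
          (-Real.sin ((1 - τ) * a) * -a) τ :=
        fun τ => by have := (Real.hasDerivAt_cos ((1 - τ) * a)).comp τ (hi1 τ); exact this
      have hcos2 : ∀ τ, HasDerivAt (fun τ => Real.cos (τ * a))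
          (-Real.sin (τ * a) * a) τ :=
        fun τ => by have := (Real.hasDerivAt_cos (τ * a)).comp τ (hi2 τ); exact this
      set u : ℝ → ℝ := fun τ =>
        Real.sin ((1 - τ) * a) / Real.sin a * f s₀ + Real.sin (τ * a) / Real.sin a * f s₁
        with hu_def
      set u' : ℝ → ℝ := fun τ =>
        Real.cos ((1 - τ) * a) * -a / Real.sin a * f s₀ +
          Real.cos (τ * a) * a / Real.sin a * f s₁ with hu'_def
      set u'' : ℝ → ℝ := fun τ =>
        -Real.sin ((1 - τ) * a) * -a * -a / Real.sin a * f s₀ +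
          -Real.sin (τ * a) * a * a / Real.sin a * f s₁ with hu''_def
      have hud1 : ∀ τ, HasDerivAt u (u' τ) τ := fun τ =>
        (((hsin1 τ).div_const _).mul_const (f s₀)).add
          (((hsin2 τ).div_const _).mul_const (f s₁))
      have hud2 : ∀ τ, HasDerivAt u' (u'' τ) τ := fun τ =>
        ((((hcos1 τ).mul_const (-a)).div_const _).mul_const (f s₀)).add
          ((((hcos2 τ).mul_const a).div_const _).mul_const (f s₁))
      have hueq : ∀ τ, u'' τ + lam * u τ = 0 := by
        intro τ
        simp only [hu''_def, hu_def]
        linear_combination (-(Real.sin ((1 - τ) * a) / Real.sin a * f s₀ +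
          Real.sin (τ * a) / Real.sin a * f s₁)) * ha2
      have hu0 : u 0 = g 0 := by
        simp only [hu_def, hg_def]
        norm_num [div_self hsina.ne']
      have hu1 : u 1 = g 1 := by
        simp only [hu_def, hg_def]
        norm_num [div_self hsina.ne']
        congr 1
        rw [hd_def]; ring
      have key := comparison lam hlam g _ _ u u' u'' hgc hg1 hg2 hgineq hud1 hud2 hueq hu0 hu1
        t ht
      rw [harg, hσ, hσ]
      simp only [hg_def, hu_def] at key
      exact key

lemma backward (Λ : ℝ) (hΛ : Λ < Real.pi ^ 2)
    (f f' f'' : ℝ → ℝ)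
    (hf' : ∀ t ∈ Set.Ioo (0 : ℝ) 1, HasDerivAt f (f' t) t)
    (hf'' : ∀ t ∈ Set.Ioo (0 : ℝ) 1, HasDerivAt f' (f'' t) t)
    (hf''cont : ContinuousOn f'' (Set.Ioo 0 1))
    (hfnonneg : ∀ t ∈ Set.Icc (0 : ℝ) 1, 0 ≤ f t)
    (H : ∀ t ∈ Set.Icc (0 : ℝ) 1, ∀ s₀ ∈ Set.Icc (0 : ℝ) 1, ∀ s₁ ∈ Set.Icc (0 : ℝ) 1,
        f ((1 - t) * s₀ + t * s₁) ≤
          sigmaCoeff Λ (1 - t) |s₀ - s₁| * f s₀ + sigmaCoeff Λ t |s₀ - s₁| * f s₁) :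
    ∀ x ∈ Set.Ioo (0 : ℝ) 1, 0 ≤ f'' x + Λ * f x := by
  intro x hx
  by_contra hneg
  push_neg at hneg
  set A : ℝ := -(Λ * f x) with hA
  set M : ℝ := (f'' x + A) / 2 with hM
  have hfA : f'' x < A := by rw [hA]; linarith
  have hMA : M < A := by rw [hM]; linarith
  have hfM : f'' x < M := by rw [hM]; linarith
  have hca : ContinuousAt f'' x := hf''cont.continuousAt (Ioo_mem_nhds hx.1 hx.2)
  have hev : ∀ᶠ y in nhds x, f'' y < M ∧ y ∈ Ioo (0:ℝ) 1 :=
    (hca.eventually_lt_const hfM).and (Ioo_mem_nhds hx.1 hx.2)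
  obtain ⟨δ, hδpos, hδ⟩ := Metric.eventually_nhds_iff.1 hev
  set ε : ℝ := min (δ / 2) (1 / 4) with hε
  have hεpos : 0 < ε := lt_min (by linarith) (by norm_num)
  have hεδ : ε < δ := lt_of_le_of_lt (min_le_left _ _) (by linarith)
  have hε4 : ε ≤ 1 / 4 := min_le_right _ _
  have hmm : ∀ y : ℝ, |y - x| ≤ ε → f'' y < M ∧ y ∈ Ioo (0:ℝ) 1 := by
    intro y hy
    exact hδ (by rw [Real.dist_eq]; linarith)
  set D : Set ℝ := Icc (x - ε) (x + ε) with hD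
  have hDsub : D ⊆ Ioo (0:ℝ) 1 := by
    intro y hy
    exact (hmm y (abs_le.2 ⟨by linarith [hy.1], by linarith [hy.2]⟩)).2
  have hintD : interior D = Ioo (x - ε) (x + ε) := interior_Icc
  have hconc : ConcaveOn ℝ D (fun y => f y - M / 2 * y ^ 2) := by
    apply concaveOn_of_hasDerivWithinAt2_nonpos (convex_Icc _ _)
      (f' := fun y => f' y - M * y) (f'' := fun y => f'' y - M)
    · apply ContinuousOn.sub
      · exact fun y hy => ((hf' y (hDsub hy)).continuousAt).continuousWithinAt
      · exact (continuous_const.mul (continuous_pow 2)).continuousOn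
    · intro y hy
      rw [hintD] at hy
      have h1 := hf' y (hDsub (Ioo_subset_Icc_self hy))
      have h2 : HasDerivAt (fun y : ℝ => M / 2 * y ^ 2) (M * y) y := by
        have h3 := (hasDerivAt_pow 2 y).const_mul (M / 2)
        exact h3.congr_deriv (by push_cast; ring)
      exact (h1.sub h2).hasDerivWithinAt
    · intro y hy
      rw [hintD] at hy
      have h1 := hf'' y (hDsub (Ioo_subset_Icc_self hy))
      have h2 : HasDerivAt (fun y : ℝ => M * y) M y := by
        simpa using (hasDerivAt_id y).const_mul M
      exact (h1.sub h2).hasDerivWithinAt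
    · intro y hy
      rw [hintD] at hy
      have := (hmm y (abs_le.2 ⟨by linarith [hy.1], by linarith [hy.2]⟩)).1
      linarith
  have hm1 : x - ε ∈ D := ⟨le_refl _, by linarith⟩
  have hm2 : x + ε ∈ D := ⟨by linarith, le_refl _⟩
  have key1 := hconc.2 hm1 hm2 (by norm_num : (0:ℝ) ≤ 1/2) (by norm_num : (0:ℝ) ≤ 1/2)
    (by norm_num)
  simp only [smul_eq_mul] at key1
  have hcomb : (1/2 : ℝ) * (x - ε) + (1/2 : ℝ) * (x + ε) = x := by ring
  rw [hcomb] at key1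
  have hsecdiff : f (x - ε) + f (x + ε) - 2 * f x ≤ M * ε ^ 2 := by nlinarith [key1]
  -- sigma inequality
  have hmem1 : x - ε ∈ Icc (0:ℝ) 1 := Ioo_subset_Icc_self (hDsub hm1)
  have hmem2 : x + ε ∈ Icc (0:ℝ) 1 := Ioo_subset_Icc_self (hDsub hm2)
  have hσineq := H (1/2) (by norm_num) (x - ε) hmem1 (x + ε) hmem2
  have habs : |(x - ε) - (x + ε)| = 2 * ε := by
    rw [abs_of_nonpos (by linarith)]; ring
  have h12 : (1:ℝ) - 1/2 = 1/2 := by norm_num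
  have hargx : ((1:ℝ) - 1/2) * (x - ε) + (1/2) * (x + ε) = x := by ring
  rw [hargx, habs, h12] at hσineq
  have hfx : 0 ≤ f x := hfnonneg x (Ioo_subset_Icc_self hx)
  have hε2pos : (0:ℝ) < ε ^ 2 := pow_pos hεpos 2
  have hlt : M * ε ^ 2 < A * ε ^ 2 := by nlinarith [mul_pos (show (0:ℝ) < A - M by linarith) hε2pos]
  rcases lt_trichotomy Λ 0 with hL | hL | hL
  · -- Λ < 0
    have hq : Λ * (2 * ε) ^ 2 < 0 := mul_neg_of_neg_of_pos hL (by positivity)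
    have hne : Λ * (2 * ε) ^ 2 ≠ 0 := hq.ne
    have hnpos : ¬ (0 < Λ * (2 * ε) ^ 2) := not_lt.2 hq.le
    set b : ℝ := ε * Real.sqrt (-Λ) with hb
    have hb2 : b ^ 2 = -Λ * ε ^ 2 := by
      rw [hb, mul_pow, Real.sq_sqrt (by linarith : (0:ℝ) ≤ -Λ)]; ring
    have hbpos : 0 < b := mul_pos hεpos (Real.sqrt_pos.2 (by linarith))
    have he2b : 2 * ε * Real.sqrt (-Λ) = 2 * b := by rw [hb]; ring
    have hshb : 0 < Real.sinh b := Real.sinh_pos_iff.2 hbpos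
    have hchb : 0 < Real.cosh b := Real.cosh_pos b
    have hσval : sigmaCoeff Λ (1/2) (2 * ε) = 1 / (2 * Real.cosh b) := by
      rw [sigmaCoeff, if_neg hne, if_neg hnpos, he2b]
      have he1b : (1/2 : ℝ) * (2 * b) = b := by ring
      rw [he1b, Real.sinh_two_mul]
      field_simp
    rw [hσval] at hσineq
    have hkey : f x * (2 * Real.cosh b) ≤ f (x - ε) + f (x + ε) := by
      have h2 : f x ≤ (f (x - ε) + f (x + ε)) / (2 * Real.cosh b) := by
        have e : 1 / (2 * Real.cosh b) * f (x - ε) + 1 / (2 * Real.cosh b) * f (x + ε)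
            = (f (x - ε) + f (x + ε)) / (2 * Real.cosh b) := by ring
        linarith [hσineq, e.symm.le, e.le]
      exact (le_div_iff₀ (by positivity)).1 h2
    have hcosh := cosh_lb b hbpos.le
    have hAε : A * ε ^ 2 ≤ f (x - ε) + f (x + ε) - 2 * f x := by
      have h3 : (1 + b ^ 2 / 2) * f x ≤ Real.cosh b * f x :=
        mul_le_mul_of_nonneg_right hcosh hfx
      have h4 : A * ε ^ 2 = -Λ * ε ^ 2 * f x := by rw [hA]; ring
      have hb2f : b ^ 2 * f x = -Λ * ε ^ 2 * f x := by rw [hb2]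
      linarith [h3, hkey, hb2f, h4]
    linarith
  · -- Λ = 0
    have hc0 : Λ * (2 * ε) ^ 2 = 0 := by rw [hL]; ring
    have hσval : sigmaCoeff Λ (1/2) (2 * ε) = 1/2 := by rw [sigmaCoeff, if_pos hc0]
    rw [hσval] at hσineq
    have hA0 : A = 0 := by rw [hA, hL]; ring
    have hAe : A * ε ^ 2 = 0 := by rw [hA0]; ring
    linarith
  · -- Λ > 0
    have hpos' : 0 < Λ * (2 * ε) ^ 2 := by positivity
    have hne : Λ * (2 * ε) ^ 2 ≠ 0 := hpos'.ne'
    set b : ℝ := ε * Real.sqrt Λ with hb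
    have hb2 : b ^ 2 = Λ * ε ^ 2 := by
      rw [hb, mul_pow, Real.sq_sqrt hL.le]; ring
    have hbpos : 0 < b := mul_pos hεpos (Real.sqrt_pos.2 hL)
    have hsqrtΛ : Real.sqrt Λ < Real.pi := by
      have h := Real.sqrt_lt_sqrt hL.le hΛ
      rwa [Real.sqrt_sq Real.pi_pos.le] at h
    have hblt : b < Real.pi / 2 := by
      have h1 := mul_le_mul_of_nonneg_right hε4 (Real.sqrt_nonneg Λ)
      have h2 : b = ε * Real.sqrt Λ := hb
      linarith [Real.pi_pos, Real.sqrt_nonneg Λ]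
    have he2b : 2 * ε * Real.sqrt Λ = 2 * b := by rw [hb]; ring
    have hsinb : 0 < Real.sin b :=
      Real.sin_pos_of_pos_of_lt_pi hbpos (by linarith [Real.pi_pos])
    have hcosb : 0 < Real.cos b :=
      Real.cos_pos_of_mem_Ioo ⟨by linarith [Real.pi_pos], hblt⟩
    have hσval : sigmaCoeff Λ (1/2) (2 * ε) = 1 / (2 * Real.cos b) := by
      rw [sigmaCoeff, if_neg hne, if_pos hpos', he2b]
      have he1b : (1/2 : ℝ) * (2 * b) = b := by ring
      rw [he1b, Real.sin_two_mul]
      field_simp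
    rw [hσval] at hσineq
    have hkey : f x * (2 * Real.cos b) ≤ f (x - ε) + f (x + ε) := by
      have h2 : f x ≤ (f (x - ε) + f (x + ε)) / (2 * Real.cos b) := by
        have e : 1 / (2 * Real.cos b) * f (x - ε) + 1 / (2 * Real.cos b) * f (x + ε)
            = (f (x - ε) + f (x + ε)) / (2 * Real.cos b) := by ring
        linarith [hσineq, e.le]
      exact (le_div_iff₀ (by positivity)).1 h2
    have hcosl : 1 - b ^ 2 / 2 ≤ Real.cos b := Real.one_sub_sq_div_two_le_cos
    have hAε : A * ε ^ 2 ≤ f (x - ε) + f (x + ε) - 2 * f x := by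
      have h3 : (1 - b ^ 2 / 2) * f x ≤ Real.cos b * f x :=
        mul_le_mul_of_nonneg_right hcosl hfx
      have h4 : A * ε ^ 2 = -Λ * ε ^ 2 * f x := by rw [hA]; ring
      have hb2f : b ^ 2 * f x = Λ * ε ^ 2 * f x := by rw [hb2]
      linarith [h3, hkey, hb2f, h4]
    linarith

/-- One-dimensional comparison: `f'' + Λ f ≥ 0` on `(0,1)` is equivalent to
`σ`-concavity of `f`, for `Λ < π²`. -/
theorem stmt_0 (Λ : ℝ) (hΛ : Λ < Real.pi ^ 2)
    (f f' f'' : ℝ → ℝ)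
    (hf : ContinuousOn f (Set.Icc 0 1))
    (hf' : ∀ t ∈ Set.Ioo (0 : ℝ) 1, HasDerivAt f (f' t) t)
    (hf'' : ∀ t ∈ Set.Ioo (0 : ℝ) 1, HasDerivAt f' (f'' t) t)
    (hf''cont : ContinuousOn f'' (Set.Ioo 0 1))
    (hfnonneg : ∀ t ∈ Set.Icc (0 : ℝ) 1, 0 ≤ f t) :
    (∀ t ∈ Set.Ioo (0 : ℝ) 1, 0 ≤ f'' t + Λ * f t) ↔
      (∀ t ∈ Set.Icc (0 : ℝ) 1, ∀ s₀ ∈ Set.Icc (0 : ℝ) 1, ∀ s₁ ∈ Set.Icc (0 : ℝ) 1,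
        f ((1 - t) * s₀ + t * s₁) ≤
          sigmaCoeff Λ (1 - t) |s₀ - s₁| * f s₀ + sigmaCoeff Λ t |s₀ - s₁| * f s₁) := by
  constructor
  · intro hyp
    exact forward Λ hΛ f f' f'' hf hf' hf'' hyp
  · intro H
    exact backward Λ hΛ f f' f'' hf' hf'' hf''cont hfnonneg H
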